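/- arXiv:1601.05496 — 6 statements merged into one kernel-verified Lean document; each statement's English description precedes it below -/
import Mathlib

section
/- Let σ be a nonnegative locally finite Borel measure on ℝⁿ, 1 < p < ∞, 0 < α < n/p. If the tail integral ∫_1^∞ (σ(B(0,t))/t^{n-αp})^{1/(p-1)} dt/t is finite, then the Wolff potential W_{α,p}σ(x) = ∫_0^∞ (σ(B(x,t))/t^{n-αp})^{1/(p-1)} dt/t is finite for almost every x ∈ ℝⁿ; conversely, if the tail integral is infinite, then W_{α,p}σ(x) = ∞ for every x ∈ ℝⁿ. -/
open MeasureTheory Metric Set Filter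
open scoped ENNReal NNReal Topology

/-- The Wolff potential `W_{α,p}σ(x) = ∫_0^∞ (σ(B(x,t))/t^{n-αp})^{1/(p-1)} dt/t`. -/
noncomputable def wolff {n : ℕ} (α p : ℝ)
    (σ : Measure (EuclideanSpace ℝ (Fin n)))
    (x : EuclideanSpace ℝ (Fin n)) : ENNReal :=
  ∫⁻ t in Ioi (0:ℝ),
    (σ (ball x t) / ENNReal.ofReal (t ^ ((n : ℝ) - α * p))) ^ (1 / (p - 1)) /
      ENNReal.ofReal t

namespace WolffAux

variable {n : ℕ} {α p : ℝ}

/-- The integrand of the Wolff potential. -/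
noncomputable def wf (α p : ℝ) (σ : Measure (EuclideanSpace ℝ (Fin n)))
    (x : EuclideanSpace ℝ (Fin n)) (t : ℝ) : ENNReal :=
  (σ (ball x t) / ENNReal.ofReal (t ^ ((n : ℝ) - α * p))) ^ (1 / (p - 1)) /
    ENNReal.ofReal t

lemma div_div' (a : ℝ≥0∞) {b : ℝ≥0∞} (c : ℝ≥0∞) (hb0 : b ≠ 0) (hbt : b ≠ ∞) :
    a / b / c = a / (b * c) := by
  rw [div_eq_mul_inv, div_eq_mul_inv, div_eq_mul_inv, mul_assoc,
    ← ENNReal.mul_inv (Or.inl hb0) (Or.inl hbt)]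

lemma wf_eq (σ : Measure (EuclideanSpace ℝ (Fin n))) (hp : 1 < p)
    (x : EuclideanSpace ℝ (Fin n)) {t : ℝ} (ht : 0 < t) :
    wf α p σ x t =
      σ (ball x t) ^ (1 / (p - 1)) /
        ENNReal.ofReal (t ^ (((n : ℝ) - α * p) * (1 / (p - 1)) + 1)) := by
  have hq : (0:ℝ) ≤ 1 / (p - 1) := le_of_lt (div_pos one_pos (by linarith))
  rw [wf, ENNReal.div_rpow_of_nonneg _ _ hq,
    ENNReal.ofReal_rpow_of_pos (Real.rpow_pos_of_pos ht _),
    ← Real.rpow_mul ht.le,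
    Real.rpow_add_one (ne_of_gt ht),
    ENNReal.ofReal_mul (Real.rpow_nonneg ht.le _),
    div_div' _ _ (ENNReal.ofReal_pos.mpr (Real.rpow_pos_of_pos ht _)).ne'
      ENNReal.ofReal_ne_top]

lemma wf_le (σ : Measure (EuclideanSpace ℝ (Fin n))) (hp : 1 < p)
    (hβ : 0 < (n : ℝ) - α * p)
    (x y : EuclideanSpace ℝ (Fin n)) {t : ℝ} (ht : 1 ≤ t) :
    wf α p σ x t ≤
      ENNReal.ofReal ((1 + dist x y) ^ (((n:ℝ) - α * p) * (1/(p-1)) + 1)) *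
        wf α p σ y (t + dist x y) := by
  have hc0 : 0 ≤ dist x y := dist_nonneg
  set c := dist x y with hc
  set q := 1/(p-1) with hqdef
  set β := (n:ℝ) - α*p with hβdef
  set γ := β * q + 1 with hγ
  have hq : 0 < q := div_pos one_pos (by linarith)
  have hγ0 : 0 < γ := by have := mul_pos hβ hq; rw [hγ]; linarith
  have ht0 : 0 < t := lt_of_lt_of_le one_pos ht
  have htc : 0 < t + c := by linarith
  rw [wf_eq σ hp x ht0, wf_eq σ hp y htc]
  set M := ENNReal.ofReal ((1 + c) ^ γ) with hM
  have hM0 : M ≠ 0 :=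
    (ENNReal.ofReal_pos.mpr (Real.rpow_pos_of_pos (by linarith) _)).ne'
  have hMt : M ≠ ∞ := ENNReal.ofReal_ne_top
  have hnum : σ (ball x t) ^ q ≤ σ (ball y (t + c)) ^ q :=
    ENNReal.rpow_le_rpow
      (measure_mono (ball_subset_ball' (le_of_eq rfl))) hq.le
  have hden : ENNReal.ofReal ((t + c) ^ γ) ≤ M * ENNReal.ofReal (t ^ γ) := by
    rw [hM, ← ENNReal.ofReal_mul (Real.rpow_nonneg (by linarith) _)]
    apply ENNReal.ofReal_le_ofReal
    calc (t + c) ^ γ ≤ ((1 + c) * t) ^ γ :=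
          Real.rpow_le_rpow (by linarith) (by nlinarith) hγ0.le
      _ = (1 + c) ^ γ * t ^ γ := Real.mul_rpow (by linarith) ht0.le
  calc σ (ball x t) ^ q / ENNReal.ofReal (t ^ γ)
      = (M * σ (ball x t) ^ q) / (M * ENNReal.ofReal (t ^ γ)) :=
        (ENNReal.mul_div_mul_left _ _ hM0 hMt).symm
    _ ≤ (M * σ (ball y (t + c)) ^ q) / ENNReal.ofReal ((t + c) ^ γ) :=
        ENNReal.div_le_div (mul_le_mul_right hnum M) hden
    _ = M * (σ (ball y (t + c)) ^ q / ENNReal.ofReal ((t + c) ^ γ)) := by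
        rw [mul_div_assoc]

lemma lint_shift (h : ℝ → ENNReal) (c a : ℝ) :
    ∫⁻ t in Ioi a, h (t + c) = ∫⁻ t in Ioi (a + c), h t := by
  have hmp : MeasurePreserving (fun x : ℝ => x + c) volume volume :=
    measurePreserving_add_right volume c
  have hme : MeasurableEmbedding (fun x : ℝ => x + c) :=
    (MeasurableEquiv.addRight c).measurableEmbedding
  have h2 := hmp.setLIntegral_comp_preimage_emb hme h (Ioi (a + c))
  rwa [preimage_add_const_Ioi, add_sub_cancel_right] at h2

lemma tail_le (σ : Measure (EuclideanSpace ℝ (Fin n))) (hp : 1 < p)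
    (hβ : 0 < (n : ℝ) - α * p) (x y : EuclideanSpace ℝ (Fin n)) :
    ∫⁻ t in Ioi (1:ℝ), wf α p σ x t ≤
      ENNReal.ofReal ((1 + dist x y) ^ (((n:ℝ) - α * p) * (1/(p-1)) + 1)) *
        ∫⁻ t in Ioi (1:ℝ), wf α p σ y t := by
  set M := ENNReal.ofReal ((1 + dist x y) ^ (((n:ℝ) - α * p) * (1/(p-1)) + 1))
  calc ∫⁻ t in Ioi (1:ℝ), wf α p σ x t
      ≤ ∫⁻ t in Ioi (1:ℝ), M * wf α p σ y (t + dist x y) :=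
        setLIntegral_mono' measurableSet_Ioi fun t ht =>
          wf_le σ hp hβ x y (le_of_lt ht)
    _ = M * ∫⁻ t in Ioi (1:ℝ), wf α p σ y (t + dist x y) :=
        lintegral_const_mul' _ _ ENNReal.ofReal_ne_top
    _ = M * ∫⁻ t in Ioi (1 + dist x y), wf α p σ y t := by
        rw [lint_shift]
    _ ≤ M * ∫⁻ t in Ioi (1:ℝ), wf α p σ y t :=
        mul_le_mul_right (lintegral_mono_set (Ioi_subset_Ioi (by
          have : (0:ℝ) ≤ dist x y := dist_nonneg; linarith))) M

lemma local_ae (σ : Measure (EuclideanSpace ℝ (Fin n)))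
    [IsLocallyFiniteMeasure σ] (hp : 1 < p) (hα : 0 < α)
    (hβ : 0 < (n : ℝ) - α * p) :
    ∀ᵐ x ∂(volume : Measure (EuclideanSpace ℝ (Fin n))),
      ∫⁻ t in Ioc (0:ℝ) 1, wf α p σ x t < ⊤ := by
  have hq : 0 < 1/(p-1) := div_pos one_pos (by linarith)
  set q := 1/(p-1) with hqdef
  set β := (n:ℝ) - α*p with hβdef
  set γ := β * q + 1 with hγ
  have hγ0 : 0 < γ := by have := mul_pos hβ hq; rw [hγ]; linarith
  filter_upwards [Besicovitch.ae_tendsto_rnDeriv σ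
      (volume : Measure (EuclideanSpace ℝ (Fin n))),
    Measure.rnDeriv_lt_top σ (volume : Measure (EuclideanSpace ℝ (Fin n)))]
    with x hx hx'
  set L := σ.rnDeriv volume x with hL
  have hev : ∀ᶠ r in 𝓝[>] (0:ℝ),
      σ (closedBall x r) / volume (closedBall x r) < L + 1 :=
    hx.eventually_lt_const (ENNReal.lt_add_right hx'.ne one_ne_zero)
  obtain ⟨ε, hεpos, hεsub⟩ :
      ∃ ε, ε ∈ Ioi (0:ℝ) ∧ Ioc (0:ℝ) ε ⊆
        {r | σ (closedBall x r) / volume (closedBall x r) < L + 1} :=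
    mem_nhdsGT_iff_exists_Ioc_subset.mp hev
  set A := (L + 1) * volume (ball (0 : EuclideanSpace ℝ (Fin n)) 1) with hA
  have hAt : A ≠ ∞ := by
    apply ENNReal.mul_ne_top (by simp [ENNReal.add_ne_top, hx'.ne])
    exact measure_ball_lt_top.ne
  have key : ∀ r ∈ Ioc (0:ℝ) ε, σ (ball x r) ≤ A * ENNReal.ofReal (r ^ (n:ℝ)) := by
    intro r hr
    have hvol : volume (closedBall x r) =
        ENNReal.ofReal (r ^ (n:ℕ)) * volume (ball (0 : EuclideanSpace ℝ (Fin n)) 1) := by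
      rw [Measure.addHaar_closedBall _ x hr.1.le, finrank_euclideanSpace_fin]
    have hv0 : volume (closedBall x r) ≠ 0 :=
      (measure_closedBall_pos volume x hr.1).ne'
    have hvt : volume (closedBall x r) ≠ ∞ := measure_closedBall_lt_top.ne
    have h1 : σ (closedBall x r) ≤ (L + 1) * volume (closedBall x r) := by
      have h2 : σ (closedBall x r) / volume (closedBall x r) < L + 1 := hεsub hr
      calc σ (closedBall x r)
          = σ (closedBall x r) / volume (closedBall x r) * volume (closedBall x r) :=
            (ENNReal.div_mul_cancel hv0 hvt).symm
        _ ≤ (L + 1) * volume (closedBall x r) := mul_le_mul_left h2.le _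
    calc σ (ball x r) ≤ σ (closedBall x r) := measure_mono ball_subset_closedBall
      _ ≤ (L + 1) * volume (closedBall x r) := h1
      _ = A * ENNReal.ofReal (r ^ (n:ℝ)) := by
          rw [hvol, hA, Real.rpow_natCast]; ring
  set ε' := min ε 1 with hε'
  have hε'0 : 0 < ε' := lt_min hεpos zero_lt_one
  have hε'1 : ε' ≤ 1 := min_le_right _ _
  have hsplit : ∫⁻ t in Ioc (0:ℝ) 1, wf α p σ x t ≤
      (∫⁻ t in Ioc (0:ℝ) ε', wf α p σ x t) + ∫⁻ t in Ioc ε' 1, wf α p σ x t := by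
    refine le_trans (lintegral_mono_set ?_) (lintegral_union_le _ _ _)
    rw [Ioc_union_Ioc_eq_Ioc hε'0.le hε'1]
  refine lt_of_le_of_lt hsplit (ENNReal.add_lt_top.mpr ⟨?_, ?_⟩)
  · -- small radii
    have hb : ∀ r ∈ Ioc (0:ℝ) ε', wf α p σ x r ≤
        A ^ q * ENNReal.ofReal (r ^ ((n:ℝ) * q - γ)) := by
      intro r hr
      have hr0 : 0 < r := hr.1
      have hrε : r ∈ Ioc (0:ℝ) ε := ⟨hr.1, le_trans hr.2 (min_le_left _ _)⟩
      rw [wf_eq σ hp x hr0]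
      calc σ (ball x r) ^ q / ENNReal.ofReal (r ^ γ)
          ≤ (A * ENNReal.ofReal (r ^ (n:ℝ))) ^ q / ENNReal.ofReal (r ^ γ) :=
            ENNReal.div_le_div (ENNReal.rpow_le_rpow (key r hrε) hq.le) le_rfl
        _ = A ^ q * (ENNReal.ofReal (r ^ (n:ℝ)) ^ q / ENNReal.ofReal (r ^ γ)) := by
            rw [ENNReal.mul_rpow_of_nonneg _ _ hq.le, mul_div_assoc]
        _ = A ^ q * ENNReal.ofReal (r ^ ((n:ℝ) * q - γ)) := by
            rw [ENNReal.ofReal_rpow_of_pos (Real.rpow_pos_of_pos hr0 _),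
              ← Real.rpow_mul hr0.le,
              ← ENNReal.ofReal_div_of_pos (Real.rpow_pos_of_pos hr0 _),
              ← Real.rpow_sub hr0]
    have hint : IntegrableOn (fun r : ℝ => r ^ ((n:ℝ) * q - γ)) (Ioc (0:ℝ) ε') := by
      apply IntegrableOn.mono_set (t := Ioo (0:ℝ) (ε' + 1))
      · rw [intervalIntegral.integrableOn_Ioo_rpow_iff (by linarith)]
        have hnβ : (n:ℝ) * q - γ = α * p * q - 1 := by rw [hγ, hβdef]; ring
        rw [hnβ]
        have : 0 < α * p * q := by positivity
        linarith
      · exact Ioc_subset_Ioo_right (by linarith)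
    calc ∫⁻ t in Ioc (0:ℝ) ε', wf α p σ x t
        ≤ ∫⁻ t in Ioc (0:ℝ) ε', A ^ q * ENNReal.ofReal (t ^ ((n:ℝ) * q - γ)) :=
          setLIntegral_mono' measurableSet_Ioc hb
      _ = A ^ q * ∫⁻ t in Ioc (0:ℝ) ε', ENNReal.ofReal (t ^ ((n:ℝ) * q - γ)) :=
          lintegral_const_mul' _ _ (ENNReal.rpow_lt_top_of_nonneg hq.le hAt).ne
      _ < ⊤ := ENNReal.mul_lt_top (ENNReal.rpow_lt_top_of_nonneg hq.le hAt)
          hint.setLIntegral_lt_top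
  · -- radii in [ε', 1]
    have hσ1 : σ (closedBall x 1) ≠ ∞ :=
      (IsCompact.measure_lt_top (isCompact_closedBall x 1)).ne
    set B := σ (closedBall x 1) ^ q / ENNReal.ofReal (ε' ^ γ) with hB
    have hBt : B < ⊤ :=
      ENNReal.div_lt_top (ENNReal.rpow_lt_top_of_nonneg hq.le hσ1).ne
        (ENNReal.ofReal_pos.mpr (Real.rpow_pos_of_pos hε'0 _)).ne'
    have hb : ∀ r ∈ Ioc ε' (1:ℝ), wf α p σ x r ≤ B := by
      intro r hr
      have hr0 : 0 < r := lt_of_lt_of_le hε'0 hr.1.le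
      rw [wf_eq σ hp x hr0]
      apply ENNReal.div_le_div
      · exact ENNReal.rpow_le_rpow
          (measure_mono ((ball_subset_closedBall).trans
            (closedBall_subset_closedBall hr.2))) hq.le
      · exact ENNReal.ofReal_le_ofReal
          (Real.rpow_le_rpow hε'0.le hr.1.le hγ0.le)
    calc ∫⁻ t in Ioc ε' (1:ℝ), wf α p σ x t
        ≤ ∫⁻ _ in Ioc ε' (1:ℝ), B := setLIntegral_mono' measurableSet_Ioc hb
      _ = B * volume (Ioc ε' (1:ℝ)) := setLIntegral_const _ _
      _ < ⊤ := ENNReal.mul_lt_top hBt (by simp [Real.volume_Ioc])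

end WolffAux

open WolffAux in
theorem stmt0 {n : ℕ} (α p : ℝ) (σ : Measure (EuclideanSpace ℝ (Fin n)))
    [IsLocallyFiniteMeasure σ]
    (hp : 1 < p) (hα : 0 < α) (hαn : α < n / p) :
    ((∫⁻ t in Ioi (1:ℝ),
        (σ (ball (0 : EuclideanSpace ℝ (Fin n)) t) /
          ENNReal.ofReal (t ^ ((n : ℝ) - α * p))) ^ (1 / (p - 1)) /
          ENNReal.ofReal t) < ⊤ →
      ∀ᵐ x ∂(volume : Measure (EuclideanSpace ℝ (Fin n))), wolff α p σ x < ⊤) ∧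
    ((∫⁻ t in Ioi (1:ℝ),
        (σ (ball (0 : EuclideanSpace ℝ (Fin n)) t) /
          ENNReal.ofReal (t ^ ((n : ℝ) - α * p))) ^ (1 / (p - 1)) /
          ENNReal.ofReal t) = ⊤ →
      ∀ x, wolff α p σ x = ⊤) := by
  have hp0 : 0 < p := by linarith
  have hβ : 0 < (n : ℝ) - α * p := by
    have h := (lt_div_iff₀ hp0).mp hαn
    linarith
  have hwolff : ∀ x, wolff α p σ x = ∫⁻ t in Ioi (0:ℝ), wf α p σ x t := fun _ => rfl
  have htail : ∀ x, (∫⁻ t in Ioi (1:ℝ),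
      (σ (ball x t) / ENNReal.ofReal (t ^ ((n : ℝ) - α * p))) ^ (1 / (p - 1)) /
        ENNReal.ofReal t) = ∫⁻ t in Ioi (1:ℝ), wf α p σ x t := fun _ => rfl
  constructor
  · intro h0
    rw [htail 0] at h0
    filter_upwards [local_ae σ hp hα hβ] with x hx
    have ht : ∫⁻ t in Ioi (1:ℝ), wf α p σ x t < ⊤ :=
      lt_of_le_of_lt (tail_le σ hp hβ x 0)
        (ENNReal.mul_lt_top ENNReal.ofReal_lt_top h0)
    have hle : wolff α p σ x ≤
        (∫⁻ t in Ioc (0:ℝ) 1, wf α p σ x t) + ∫⁻ t in Ioi (1:ℝ), wf α p σ x t := by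
      rw [hwolff]
      refine le_trans (lintegral_mono_set ?_) (lintegral_union_le _ _ _)
      rw [Ioc_union_Ioi_eq_Ioi zero_le_one]
    exact lt_of_le_of_lt hle (ENNReal.add_lt_top.mpr ⟨hx, ht⟩)
  · intro h0 x
    rw [htail 0] at h0
    have h := tail_le σ hp hβ 0 x
    rw [h0, top_le_iff] at h
    have hx : ∫⁻ t in Ioi (1:ℝ), wf α p σ x t = ⊤ := by
      by_contra hne
      exact absurd h (ENNReal.mul_lt_top ENNReal.ofReal_lt_top
        (lt_top_iff_ne_top.mpr hne)).ne
    rw [← top_le_iff, hwolff, ← hx]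
    exact lintegral_mono_set (Ioi_subset_Ioi zero_le_one)
end

section
/- Let σ be a nonnegative locally finite Borel measure on ℝⁿ and s > 0. Suppose that for every compact set E ⊂ ℝⁿ one has ∫_E (W_{α,p}σ_E)^s dσ ≤ c₀ σ(E), where σ_E is the restriction of σ to E. Then there is a constant C such that σ(E) ≤ C cap_{α,p}(E) for all compact sets E. (Proof idea: write σ(E) = ∫_E (W_{α,p}σ_E)^{-β}(W_{α,p}σ_E)^β dσ, apply Hölder with exponents r = 1 + (p-1)/s, r' = (s+p-1)/s, choosing β = s(p-1)/(s+p-1), and use the known estimate ∫_E (W_{α,p}σ_E)^{-(p-1)} dσ ≤ c cap_{α,p}(E).) -/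
open MeasureTheory Metric Set

/-- The Riesz potential `I_α μ(x) = ∫_0^∞ μ(B(x,r))/r^{n-α} dr/r`. -/
noncomputable def riesz {n : ℕ} (α : ℝ)
    (μ : Measure (EuclideanSpace ℝ (Fin n)))
    (x : EuclideanSpace ℝ (Fin n)) : ENNReal :=
  ∫⁻ r in Ioi (0:ℝ),
    μ (ball x r) / ENNReal.ofReal (r ^ ((n : ℝ) - α)) / ENNReal.ofReal r

/-- The `(α,p)`-capacity `cap_{α,p}(E) = inf { ‖f‖_{L^p}^p : I_α f ≥ 1 on E, f ≥ 0 }`. -/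
noncomputable def capa {n : ℕ} (α p : ℝ) (E : Set (EuclideanSpace ℝ (Fin n))) : ENNReal :=
  sInf { c | ∃ f : EuclideanSpace ℝ (Fin n) → ENNReal, Measurable f ∧
    (∀ x ∈ E, 1 ≤ riesz α (volume.withDensity f) x) ∧
    c = ∫⁻ x, (f x) ^ p }


lemma measurable_wolff {n : ℕ} (α p : ℝ) (μ : Measure (EuclideanSpace ℝ (Fin n)))
    [SFinite μ] : Measurable (wolff α p μ) := by
  have hball : Measurable fun q : (EuclideanSpace ℝ (Fin n)) × ℝ => μ (ball q.1 q.2) := by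
    have hS : MeasurableSet {r : ((EuclideanSpace ℝ (Fin n)) × ℝ) × (EuclideanSpace ℝ (Fin n)) |
        dist r.2 r.1.1 < r.1.2} := by
      apply measurableSet_lt
      · exact (continuous_dist.comp
          (continuous_snd.prodMk (continuous_fst.comp continuous_fst))).measurable
      · exact (continuous_snd.comp continuous_fst).measurable
    have := (Measurable.indicator (measurable_const (a := (1:ENNReal))) hS).lintegral_prod_right'
      (ν := μ)
    convert this using 1
    funext q
    have heq : (fun y => ({r : ((EuclideanSpace ℝ (Fin n)) × ℝ) × (EuclideanSpace ℝ (Fin n)) |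
        dist r.2 r.1.1 < r.1.2}).indicator (fun _ => (1:ENNReal)) (q, y)) =
        (ball q.1 q.2).indicator (fun _ => (1:ENNReal)) := by
      funext y
      by_cases h : dist y q.1 < q.2 <;> simp [Set.indicator, mem_ball, h]
    calc μ (ball q.1 q.2) = ∫⁻ y in ball q.1 q.2, 1 ∂μ := (setLIntegral_one _).symm
      _ = _ := by rw [← lintegral_indicator measurableSet_ball, heq]
  have h1 : Measurable fun q : (EuclideanSpace ℝ (Fin n)) × ℝ =>
      (μ (ball q.1 q.2) / ENNReal.ofReal (q.2 ^ ((n : ℝ) - α * p))) ^ (1 / (p - 1)) /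
        ENNReal.ofReal q.2 := by
    apply Measurable.div
    · apply Measurable.pow _ measurable_const
      apply hball.div
      have : Measurable fun t : ℝ => ENNReal.ofReal (t ^ ((n : ℝ) - α * p)) := by fun_prop
      exact this.comp measurable_snd
    · exact ENNReal.measurable_ofReal.comp measurable_snd
  exact h1.lintegral_prod_right'

theorem stmt2 {n : ℕ} (α p s : ℝ) (σ : Measure (EuclideanSpace ℝ (Fin n)))
    [IsLocallyFiniteMeasure σ]
    (hp : 1 < p) (hα : 0 < α) (hαn : α < n / p) (hs : 0 < s)
    (c₀ : ENNReal) (hc₀ : c₀ ≠ ⊤)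
    (hyp : ∀ E : Set (EuclideanSpace ℝ (Fin n)), IsCompact E →
      (∫⁻ x in E, (wolff α p (σ.restrict E) x) ^ s ∂σ) ≤ c₀ * σ E)
    -- Theorem 1.11 of [V1], assumed as known input:
    (c₁ : ENNReal) (hc₁ : c₁ ≠ ⊤)
    (hknown : ∀ E : Set (EuclideanSpace ℝ (Fin n)), IsCompact E → 0 < σ E →
      (∫⁻ x in E, (wolff α p (σ.restrict E) x) ^ (-(p - 1)) ∂σ) ≤ c₁ * capa α p E) :
    ∃ C : ENNReal, C ≠ ⊤ ∧
      ∀ E : Set (EuclideanSpace ℝ (Fin n)), IsCompact E → σ E ≤ C * capa α p E := by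
  classical
  have hp1 : (0:ℝ) < p - 1 := by linarith
  set L : ENNReal := (2 * c₀ + 1) ^ (1/s) with hLdef
  have h2c : (2 * c₀ + 1 : ENNReal) ≠ ⊤ := by
    simp [ENNReal.add_ne_top, ENNReal.mul_ne_top, hc₀]
  have hL_ne_top : L ≠ ⊤ := ENNReal.rpow_ne_top_of_nonneg (by positivity) h2c
  have hL_ne_zero : L ≠ 0 := by
    have : (0:ENNReal) < (2 * c₀ + 1) ^ (1/s) :=
      ENNReal.rpow_pos (lt_of_lt_of_le zero_lt_one le_add_self) h2c
    exact this.ne'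
  have hLp_ne_top : L ^ (p-1) ≠ ⊤ := ENNReal.rpow_ne_top_of_nonneg hp1.le hL_ne_top
  refine ⟨2 * L ^ (p - 1) * c₁ + 1, ?_, ?_⟩
  · exact ENNReal.add_ne_top.2 ⟨ENNReal.mul_ne_top
      (ENNReal.mul_ne_top (by norm_num) hLp_ne_top) hc₁, by norm_num⟩
  intro E hE
  by_cases h0 : σ E = 0
  · simp [h0]
  by_cases hcap : capa α p E = ⊤
  · rw [hcap, ENNReal.mul_top (by simp)]
    exact le_top
  have hEm : MeasurableSet E := hE.isClosed.measurableSet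
  have hfin : σ E ≠ ⊤ := hE.measure_lt_top.ne
  haveI : IsFiniteMeasure (σ.restrict E) :=
    ⟨by rw [Measure.restrict_apply_univ]; exact hE.measure_lt_top⟩
  set W : EuclideanSpace ℝ (Fin n) → ENNReal := wolff α p (σ.restrict E) with hW
  have hWm : Measurable W := measurable_wolff α p _
  set A : Set (EuclideanSpace ℝ (Fin n)) := {x | L ≤ W x} with hA
  have hAm : MeasurableSet A := measurableSet_le measurable_const hWm
  have hLs : L ^ s = 2 * c₀ + 1 := by
    rw [hLdef, ← ENNReal.rpow_mul, one_div, inv_mul_cancel₀ hs.ne', ENNReal.rpow_one]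
  have b1 : L ^ s * σ (E ∩ A) ≤ c₀ * σ E := by
    have h1 : ∫⁻ _ in E ∩ A, L ^ s ∂σ ≤ ∫⁻ x in E ∩ A, W x ^ s ∂σ := by
      refine setLIntegral_mono' (hEm.inter hAm) fun x hx => ?_
      exact ENNReal.rpow_le_rpow hx.2 hs.le
    calc L ^ s * σ (E ∩ A) = ∫⁻ _ in E ∩ A, L ^ s ∂σ := (setLIntegral_const _ _).symm
      _ ≤ ∫⁻ x in E ∩ A, W x ^ s ∂σ := h1
      _ ≤ ∫⁻ x in E, W x ^ s ∂σ := lintegral_mono_set inter_subset_left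
      _ ≤ c₀ * σ E := hyp E hE
  have key1 : 2 * σ (E ∩ A) ≤ σ E := by
    have h2 : (2*c₀+1) * (2 * σ (E ∩ A)) ≤ (2*c₀+1) * σ E := by
      calc (2*c₀+1) * (2 * σ (E ∩ A)) = 2 * ((2*c₀+1) * σ (E ∩ A)) := by ring
        _ ≤ 2 * (c₀ * σ E) := by rw [← hLs]; exact mul_le_mul_right b1 2
        _ = 2*c₀ * σ E := by ring
        _ ≤ (2*c₀+1) * σ E := mul_le_mul_left le_self_add _
    exact (ENNReal.mul_le_mul_iff_right (by simp) h2c).1 h2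
  have b2 : L ^ (-(p-1)) * σ (E \ A) ≤ c₁ * capa α p E := by
    have h1 : ∫⁻ _ in E \ A, L ^ (-(p-1)) ∂σ ≤ ∫⁻ x in E \ A, W x ^ (-(p-1)) ∂σ := by
      refine setLIntegral_mono' (hEm.diff hAm) fun x hx => ?_
      have hxW : W x ≤ L := le_of_not_ge hx.2
      rw [ENNReal.rpow_neg, ENNReal.rpow_neg]
      exact ENNReal.inv_le_inv.mpr (ENNReal.rpow_le_rpow hxW hp1.le)
    calc L ^ (-(p-1)) * σ (E \ A) = ∫⁻ _ in E \ A, L ^ (-(p-1)) ∂σ :=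
        (setLIntegral_const _ _).symm
      _ ≤ ∫⁻ x in E \ A, W x ^ (-(p-1)) ∂σ := h1
      _ ≤ ∫⁻ x in E, W x ^ (-(p-1)) ∂σ := lintegral_mono_set diff_subset
      _ ≤ c₁ * capa α p E := hknown E hE (pos_iff_ne_zero.mpr h0)
  have key2 : σ (E \ A) ≤ L ^ (p-1) * (c₁ * capa α p E) := by
    have h2 := mul_le_mul_right b2 (L ^ (p-1))
    rwa [← mul_assoc, ← ENNReal.rpow_add _ _ hL_ne_zero hL_ne_top, add_neg_cancel,
      ENNReal.rpow_zero, one_mul] at h2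
  have h3 : σ E ≤ σ E / 2 + L ^ (p-1) * (c₁ * capa α p E) := by
    refine (measure_le_inter_add_diff σ E A).trans (add_le_add ?_ key2)
    rw [ENNReal.le_div_iff_mul_le (by norm_num) (by norm_num), mul_comm]
    exact key1
  have h4 : σ E / 2 ≤ L ^ (p-1) * (c₁ * capa α p E) := by
    have h5 := tsub_le_iff_left.mpr h3
    rwa [ENNReal.sub_half hfin] at h5
  calc σ E = 2 * (σ E / 2) := by
        rw [ENNReal.mul_div_cancel' (by norm_num) (by norm_num)]
    _ ≤ 2 * (L ^ (p-1) * (c₁ * capa α p E)) := mul_le_mul_right h4 2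
    _ = (2 * L ^ (p-1) * c₁) * capa α p E := by ring
    _ ≤ (2 * L ^ (p-1) * c₁ + 1) * capa α p E := mul_le_mul_left le_self_add _
end

section
/- Let 0 < q < p-1, 1 < p < ∞, 0 < α < n/p, and let σ be a nonnegative locally finite Borel measure on ℝⁿ. Suppose u is a nonnegative function satisfying u ≥ W_{α,p}(u^q dσ), the lower bound u ≥ c⁻¹ (W_{α,p}σ)^{(p-1)/(p-1-q)}, and the upper bound u ≤ c (W_{α,p}σ + (W_{α,p}σ)^{(p-1)/(p-1-q)}) < ∞ a.e., with u not identically zero. Then W_{α,p}((W_{α,p}σ)^{(p-1)q/(p-1-q)} dσ) ≤ κ (W_{α,p}σ + (W_{α,p}σ)^{(p-1)/(p-1-q)}) a.e., where κ depends only on p, q, c. -/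
open MeasureTheory Metric Set

theorem stmt5 {n : ℕ} (α p q : ℝ) (σ : Measure (EuclideanSpace ℝ (Fin n)))
    [IsLocallyFiniteMeasure σ]
    (hp : 1 < p) (hα : 0 < α) (hαn : α < n / p) (hq : 0 < q) (hqp : q < p - 1)
    (u : EuclideanSpace ℝ (Fin n) → ENNReal)
    (c : ENNReal) (hc : 0 < c) (hc' : c ≠ ⊤)
    (hsuper : ∀ x, wolff α p (σ.withDensity fun y => (u y) ^ q) x ≤ u x)
    (hlow : ∀ x, c⁻¹ * (wolff α p σ x) ^ ((p - 1) / (p - 1 - q)) ≤ u x)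
    (hup : ∀ᵐ x ∂(volume : Measure (EuclideanSpace ℝ (Fin n))),
      u x ≤ c * (wolff α p σ x + (wolff α p σ x) ^ ((p - 1) / (p - 1 - q))) ∧
      c * (wolff α p σ x + (wolff α p σ x) ^ ((p - 1) / (p - 1 - q))) < ⊤)
    (hnz : ∃ x, u x ≠ 0) :
    ∃ κ : ENNReal, 0 < κ ∧ κ ≠ ⊤ ∧
      ∀ᵐ x ∂(volume : Measure (EuclideanSpace ℝ (Fin n))),
        wolff α p (σ.withDensity fun y => (wolff α p σ y) ^ ((p - 1) * q / (p - 1 - q))) x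
          ≤ κ * (wolff α p σ x + (wolff α p σ x) ^ ((p - 1) / (p - 1 - q))) := by
  have hp1 : (0:ℝ) < p - 1 := by linarith
  have hinv : (0:ℝ) ≤ 1 / (p - 1) := by positivity
  have hq0 : (0:ℝ) ≤ q := le_of_lt hq
  set k : ENNReal := c ^ q with hk
  have hk_ne_top : k ≠ ⊤ := ENNReal.rpow_ne_top_of_nonneg hq0 hc'
  -- pointwise density bound
  have hdens : ∀ y, (wolff α p σ y) ^ ((p-1)*q/(p-1-q)) ≤ k * (u y) ^ q := by
    intro y
    have h1 : (wolff α p σ y) ^ ((p-1)/(p-1-q)) ≤ c * u y := by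
      calc (wolff α p σ y) ^ ((p-1)/(p-1-q))
          = c * (c⁻¹ * (wolff α p σ y) ^ ((p-1)/(p-1-q))) := by
            rw [← mul_assoc, ENNReal.mul_inv_cancel hc.ne' hc', one_mul]
        _ ≤ c * u y := mul_le_mul_right (hlow y) c
    have h2 := ENNReal.rpow_le_rpow h1 hq0
    rw [ENNReal.mul_rpow_of_nonneg _ _ hq0] at h2
    calc (wolff α p σ y) ^ ((p-1)*q/(p-1-q))
        = ((wolff α p σ y) ^ ((p-1)/(p-1-q))) ^ q := by
          rw [← ENNReal.rpow_mul]
          ring_nf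
      _ ≤ c ^ q * (u y) ^ q := h2
  -- monotonicity of wolff in the measure
  have hmono : ∀ x, wolff α p (σ.withDensity fun y => (wolff α p σ y) ^ ((p-1)*q/(p-1-q))) x
      ≤ wolff α p (σ.withDensity fun y => k * (u y) ^ q) x := by
    intro x
    refine lintegral_mono fun t => ?_
    have hm : (σ.withDensity fun y => (wolff α p σ y) ^ ((p-1)*q/(p-1-q))) (ball x t)
        ≤ (σ.withDensity fun y => k * (u y) ^ q) (ball x t) :=
      withDensity_mono (Filter.Eventually.of_forall hdens) _
    gcongr
  -- scaling by the constant k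
  have hscale : ∀ x, wolff α p (σ.withDensity fun y => k * (u y) ^ q) x
      = k ^ (1/(p-1)) * wolff α p (σ.withDensity fun y => (u y) ^ q) x := by
    intro x
    unfold wolff
    rw [← lintegral_const_mul' _ _ (ENNReal.rpow_ne_top_of_nonneg hinv hk_ne_top)]
    refine lintegral_congr fun t => ?_
    have hball : (σ.withDensity fun y => k * (u y) ^ q) (ball x t)
        = k * (σ.withDensity fun y => (u y) ^ q) (ball x t) := by
      rw [withDensity_apply _ measurableSet_ball, withDensity_apply _ measurableSet_ball,
        lintegral_const_mul' _ _ hk_ne_top]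
    rw [hball, mul_div_assoc, ENNReal.mul_rpow_of_nonneg _ _ hinv, mul_div_assoc]
  refine ⟨k ^ (1/(p-1)) * c, ?_, ?_, ?_⟩
  · exact ENNReal.mul_pos (ENNReal.rpow_pos (ENNReal.rpow_pos hc hc') hk_ne_top).ne' hc.ne'
  · exact ENNReal.mul_ne_top (ENNReal.rpow_ne_top_of_nonneg hinv hk_ne_top) hc'
  · filter_upwards [hup] with x hx
    calc wolff α p (σ.withDensity fun y => (wolff α p σ y) ^ ((p-1)*q/(p-1-q))) x
        ≤ k ^ (1/(p-1)) * wolff α p (σ.withDensity fun y => (u y) ^ q) x := by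
          rw [← hscale]; exact hmono x
      _ ≤ k ^ (1/(p-1)) * u x := mul_le_mul_right (hsuper x) _
      _ ≤ k ^ (1/(p-1)) * (c * (wolff α p σ x + (wolff α p σ x) ^ ((p-1)/(p-1-q)))) :=
          mul_le_mul_right hx.1 _
      _ = k ^ (1/(p-1)) * c * (wolff α p σ x + (wolff α p σ x) ^ ((p-1)/(p-1-q))) := by
          rw [mul_assoc]
end

section
/- Let 0 < q < p-1, 1 < p < ∞, 0 < α < n/p, and let σ be a nonnegative locally finite Borel measure on ℝⁿ. Then for every x ∈ ℝⁿ, W_{α,p}((W_{α,p}σ)^q dσ)(x) ≤ b(p,q) [ W_{α,p}((W_{α,p}σ)^{(p-1)q/(p-1-q)} dσ)(x) + W_{α,p}σ(x) ]. -/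
open MeasureTheory Metric Set

/-- Young-type inequality in `ℝ≥0∞`. -/
lemma young_ennreal {a b : ENNReal} {s : ℝ} (hs : 0 < s) (hs1 : s < 1) :
    a ^ s * b ^ (1 - s) ≤ a + b := by
  rcases eq_or_ne (a + b) ⊤ with h | h
  · simp [h]
  rcases eq_or_ne (a + b) 0 with h0 | h0
  · rcases add_eq_zero.mp h0 with ⟨ha, hb⟩
    simp [ha, hb, ENNReal.zero_rpow_of_pos hs, ENNReal.zero_rpow_of_pos (by linarith : (0:ℝ) < 1 - s)]
  calc a ^ s * b ^ (1 - s)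
      ≤ (a + b) ^ s * (a + b) ^ (1 - s) :=
        mul_le_mul' (ENNReal.rpow_le_rpow le_self_add hs.le)
          (ENNReal.rpow_le_rpow le_add_self (by linarith))
    _ = (a + b) ^ (s + (1 - s)) := (ENNReal.rpow_add _ _ h0 h).symm
    _ = a + b := by norm_num

/-- Measurability of the Wolff potential. -/
lemma wolff_measurable {n : ℕ} (α p : ℝ) (σ : Measure (EuclideanSpace ℝ (Fin n)))
    [SFinite σ] : Measurable (wolff α p σ) := by
  have hball : Measurable (fun z : EuclideanSpace ℝ (Fin n) × ℝ => σ (ball z.1 z.2)) := by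
    have hs : MeasurableSet {w : (EuclideanSpace ℝ (Fin n) × ℝ) × EuclideanSpace ℝ (Fin n) |
        dist w.2 w.1.1 < w.1.2} := by
      apply measurableSet_lt
      · exact (measurable_snd.dist (measurable_fst.comp measurable_fst))
      · exact measurable_snd.comp measurable_fst
    have h := measurable_measure_prodMk_left (ν := σ) hs
    have heq : ∀ z : EuclideanSpace ℝ (Fin n) × ℝ,
        ball z.1 z.2 = Prod.mk z ⁻¹' {w : (EuclideanSpace ℝ (Fin n) × ℝ) ×
          EuclideanSpace ℝ (Fin n) | dist w.2 w.1.1 < w.1.2} := by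
      intro z; ext y; simp [mem_ball]
    simp only [heq]
    exact h
  have hF : Measurable (fun z : EuclideanSpace ℝ (Fin n) × ℝ =>
      (σ (ball z.1 z.2) / ENNReal.ofReal (z.2 ^ ((n : ℝ) - α * p))) ^ (1 / (p - 1)) /
        ENNReal.ofReal z.2) := by
    apply Measurable.div
    · apply Measurable.pow_const
      apply Measurable.div hball
      exact ENNReal.measurable_ofReal.comp
        ((measurable_snd.pow measurable_const))
    · exact ENNReal.measurable_ofReal.comp measurable_snd
  exact hF.lintegral_prod_right'

theorem stmt16 {n : ℕ} (α p q : ℝ) (σ : Measure (EuclideanSpace ℝ (Fin n)))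
    [IsLocallyFiniteMeasure σ]
    (hp : 1 < p) (hα : 0 < α) (hαn : α < n / p) (hq : 0 < q) (hqp : q < p - 1) :
    ∃ b : ENNReal, 0 < b ∧ b ≠ ⊤ ∧
      ∀ x : EuclideanSpace ℝ (Fin n),
        wolff α p (σ.withDensity fun y => (wolff α p σ y) ^ q) x
          ≤ b * (wolff α p
              (σ.withDensity fun y => (wolff α p σ y) ^ ((p - 1) * q / (p - 1 - q))) x
            + wolff α p σ x) := by
  have hp1 : (0:ℝ) < p - 1 := by linarith
  have hpq1 : (0:ℝ) < p - 1 - q := by linarith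
  set f : EuclideanSpace ℝ (Fin n) → ENNReal := wolff α p σ with hf
  have hfm : Measurable f := wolff_measurable α p σ
  set μ := σ.withDensity fun y => f y ^ q with hμ
  set ν := σ.withDensity fun y => f y ^ ((p - 1) * q / (p - 1 - q)) with hν
  set s : ℝ := (p - 1 - q) / (p - 1) with hsdef
  have hs : 0 < s := div_pos hpq1 hp1
  have hs1 : s < 1 := (div_lt_one hp1).mpr (by linarith)
  set c : ℝ := (n : ℝ) - α * p with hcdef
  have hr : (0:ℝ) ≤ 1 / (p - 1) := by positivity
  refine ⟨1, zero_lt_one, ENNReal.one_ne_top, fun x => ?_⟩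
  rw [one_mul]
  -- Hölder's inequality on balls
  have holder : ∀ t : ℝ, μ (ball x t) ≤ ν (ball x t) ^ s * σ (ball x t) ^ (1 - s) := by
    intro t
    have hB : MeasurableSet (ball x t) := measurableSet_ball
    rw [hμ, hν, withDensity_apply _ hB, withDensity_apply _ hB]
    set P : ℝ := (p - 1) / (p - 1 - q) with hPdef
    set Q : ℝ := (p - 1) / q with hQdef
    have hPQ : P.HolderConjugate Q := by
      rw [Real.holderConjugate_iff]; constructor
      · rw [hPdef, lt_div_iff₀ hpq1]; linarith
      · rw [hPdef, hQdef]; field_simp; ring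
    have key := ENNReal.lintegral_mul_le_Lp_mul_Lq (σ.restrict (ball x t)) hPQ
      (f := fun y => f y ^ q) (g := fun _ => 1)
      ((hfm.pow_const q).aemeasurable) aemeasurable_const
    simp only [mul_one, Pi.mul_apply] at key
    have h1 : ∀ y, (f y ^ q) ^ P = f y ^ ((p - 1) * q / (p - 1 - q)) := by
      intro y
      rw [← ENNReal.rpow_mul]
      congr 1
      rw [hPdef]; field_simp
    have h2 : (∫⁻ y in ball x t, ((1:ENNReal)) ^ Q ∂σ) = σ (ball x t) := by
      simp [Measure.restrict_apply_univ]
    have h3 : 1 / P = s := by rw [hPdef, hsdef, one_div_div]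
    have h4 : 1 / Q = 1 - s := by
      rw [hQdef, hsdef, one_div_div]
      field_simp
      ring
    calc ∫⁻ y in ball x t, f y ^ q ∂σ
        ≤ (∫⁻ y in ball x t, (f y ^ q) ^ P ∂σ) ^ (1 / P) *
            (∫⁻ _ in ball x t, ((1:ENNReal)) ^ Q ∂σ) ^ (1 / Q) := key
      _ = (∫⁻ y in ball x t, f y ^ ((p - 1) * q / (p - 1 - q)) ∂σ) ^ s *
            σ (ball x t) ^ (1 - s) := by
          simp_rw [h1]; rw [h2, h3, h4]
  -- pointwise inequality of integrands
  have ptwise : ∀ t ∈ Ioi (0:ℝ),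
      (μ (ball x t) / ENNReal.ofReal (t ^ c)) ^ (1 / (p - 1)) / ENNReal.ofReal t
        ≤ (ν (ball x t) / ENNReal.ofReal (t ^ c)) ^ (1 / (p - 1)) / ENNReal.ofReal t
          + (σ (ball x t) / ENNReal.ofReal (t ^ c)) ^ (1 / (p - 1)) / ENNReal.ofReal t := by
    intro t ht
    rw [mem_Ioi] at ht
    set T : ENNReal := ENNReal.ofReal (t ^ c) with hTdef
    have hT0 : T ≠ 0 := by
      simp [hTdef, ENNReal.ofReal_eq_zero, not_le, Real.rpow_pos_of_pos ht]
    have hTtop : T ≠ ⊤ := ENNReal.ofReal_ne_top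
    have hTi0 : T⁻¹ ≠ 0 := ENNReal.inv_ne_zero.mpr hTtop
    have hTitop : T⁻¹ ≠ ⊤ := ENNReal.inv_ne_top.mpr hT0
    have step1 : μ (ball x t) / T ≤ (ν (ball x t) / T) ^ s * (σ (ball x t) / T) ^ (1 - s) := by
      have hTinv : T⁻¹ = (T⁻¹) ^ s * (T⁻¹) ^ (1 - s) := by
        rw [← ENNReal.rpow_add _ _ hTi0 hTitop]
        norm_num
      calc μ (ball x t) / T = μ (ball x t) * T⁻¹ := by rw [div_eq_mul_inv]
        _ ≤ (ν (ball x t) ^ s * σ (ball x t) ^ (1 - s)) * ((T⁻¹) ^ s * (T⁻¹) ^ (1 - s)) := by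
            rw [← hTinv]; exact mul_le_mul_left (holder t) _
        _ = (ν (ball x t) * T⁻¹) ^ s * (σ (ball x t) * T⁻¹) ^ (1 - s) := by
            rw [ENNReal.mul_rpow_of_nonneg _ _ hs.le,
              ENNReal.mul_rpow_of_nonneg _ _ (by linarith : (0:ℝ) ≤ 1 - s)]
            ring
        _ = (ν (ball x t) / T) ^ s * (σ (ball x t) / T) ^ (1 - s) := by
            rw [div_eq_mul_inv, div_eq_mul_inv]
    have step2 : (μ (ball x t) / T) ^ (1 / (p - 1))
        ≤ (ν (ball x t) / T) ^ (1 / (p - 1)) + (σ (ball x t) / T) ^ (1 / (p - 1)) := by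
      calc (μ (ball x t) / T) ^ (1 / (p - 1))
          ≤ ((ν (ball x t) / T) ^ s * (σ (ball x t) / T) ^ (1 - s)) ^ (1 / (p - 1)) :=
            ENNReal.rpow_le_rpow step1 hr
        _ = ((ν (ball x t) / T) ^ (1 / (p - 1))) ^ s *
              ((σ (ball x t) / T) ^ (1 / (p - 1))) ^ (1 - s) := by
            rw [ENNReal.mul_rpow_of_nonneg _ _ hr, ← ENNReal.rpow_mul, ← ENNReal.rpow_mul,
              ← ENNReal.rpow_mul, ← ENNReal.rpow_mul, mul_comm s, mul_comm (1 - s)]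
        _ ≤ (ν (ball x t) / T) ^ (1 / (p - 1)) + (σ (ball x t) / T) ^ (1 / (p - 1)) :=
            young_ennreal hs hs1
    calc (μ (ball x t) / T) ^ (1 / (p - 1)) / ENNReal.ofReal t
        ≤ ((ν (ball x t) / T) ^ (1 / (p - 1)) + (σ (ball x t) / T) ^ (1 / (p - 1)))
            / ENNReal.ofReal t := ENNReal.div_le_div_right step2 _
      _ = _ := ENNReal.add_div
  -- measurability of the integrands in t
  have measG : ∀ (ρ : Measure (EuclideanSpace ℝ (Fin n))),
      Measurable (fun t : ℝ =>
        (ρ (ball x t) / ENNReal.ofReal (t ^ c)) ^ (1 / (p - 1)) / ENNReal.ofReal t) := by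
    intro ρ
    have hmono : Monotone fun t : ℝ => ρ (ball x t) := by
      intro a b hab
      exact measure_mono (ball_subset_ball hab)
    apply Measurable.div
    · exact ((hmono.measurable.div
        (ENNReal.measurable_ofReal.comp (measurable_id.pow measurable_const))).pow_const _)
    · exact ENNReal.measurable_ofReal
  calc wolff α p μ x
      ≤ ∫⁻ t in Ioi (0:ℝ),
          ((ν (ball x t) / ENNReal.ofReal (t ^ c)) ^ (1 / (p - 1)) / ENNReal.ofReal t
            + (σ (ball x t) / ENNReal.ofReal (t ^ c)) ^ (1 / (p - 1)) / ENNReal.ofReal t) := by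
        refine setLIntegral_mono ((measG ν).add (measG σ)) ?_
        intro t ht
        exact ptwise t ht
    _ = wolff α p ν x + wolff α p σ x := by
        rw [lintegral_add_left ((measG ν))]
        rfl
end

section
/- Let 0 < q < 1 and 0 < 2α < n, and let σ be a nonnegative locally finite Borel measure on ℝⁿ satisfying, for all x ∈ ℝⁿ and r > 0, ∫_{B(x,r/2)} (I_{2α}σ)^{q/(1-q)} dσ ≤ c σ(B(x,r)) (1 + ∫_r^∞ σ(B(x,t))/t^{n-2α} dt/t)^{q/(1-q)}. Then there exists κ = κ(α,n,q,c) such that the pointwise condition I_{2α}((I_{2α}σ)^{q/(1-q)} dσ) ≤ κ ( I_{2α}σ + (I_{2α}σ)^{1/(1-q)} ) holds everywhere. -/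
open MeasureTheory Metric Set

/-- The Riesz potential `I_{2α}μ(x) = ∫_0^∞ μ(B(x,t))/t^{n-2α} dt/t`. -/
noncomputable def riesz2 {n : ℕ} (α : ℝ)
    (μ : Measure (EuclideanSpace ℝ (Fin n)))
    (x : EuclideanSpace ℝ (Fin n)) : ENNReal :=
  ∫⁻ t in Ioi (0:ℝ),
    μ (ball x t) / ENNReal.ofReal (t ^ ((n : ℝ) - 2 * α)) / ENNReal.ofReal t

theorem stmt18 {n : ℕ} (α q : ℝ) (σ : Measure (EuclideanSpace ℝ (Fin n)))
    [IsLocallyFiniteMeasure σ]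
    (hq : 0 < q) (hq1 : q < 1) (hα : 0 < α) (hαn : 2 * α < n)
    (c : ENNReal) (hc : c ≠ ⊤)
    (hyp : ∀ (x : EuclideanSpace ℝ (Fin n)) (r : ℝ), 0 < r →
      (∫⁻ y in ball x (r / 2), (riesz2 α σ y) ^ (q / (1 - q)) ∂σ)
        ≤ c * σ (ball x r) *
          (1 + ∫⁻ t in Ioi r,
            σ (ball x t) / ENNReal.ofReal (t ^ ((n : ℝ) - 2 * α)) /
              ENNReal.ofReal t) ^ (q / (1 - q))) :
    ∃ κ : ENNReal, 0 < κ ∧ κ ≠ ⊤ ∧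
      ∀ x : EuclideanSpace ℝ (Fin n),
        riesz2 α (σ.withDensity fun y => (riesz2 α σ y) ^ (q / (1 - q))) x
          ≤ κ * (riesz2 α σ x + (riesz2 α σ x) ^ (1 / (1 - q))) := by
  have h1q : (0:ℝ) < 1 - q := by linarith
  set p : ℝ := q / (1 - q) with hp_def
  have hp : 0 < p := div_pos hq h1q
  set β : ℝ := (n : ℝ) - 2 * α with hβ_def
  have h2β : (0:ℝ) < 2 ^ β := Real.rpow_pos_of_pos (by norm_num) β
  have hβ : (0:ℝ) < β := by rw [hβ_def]; linarith
  set u : ENNReal := ENNReal.ofReal (2 ^ β) with hu_def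
  have hu0 : u ≠ 0 := by
    simp [hu_def, ENNReal.ofReal_eq_zero, not_le, h2β]
  have hutop : u ≠ ⊤ := ENNReal.ofReal_ne_top
  set C : ENNReal := c * u * (2:ENNReal) ^ p with hC_def
  have hCtop : C ≠ ⊤ :=
    ENNReal.mul_ne_top (ENNReal.mul_ne_top hc hutop)
      (ENNReal.rpow_ne_top_of_nonneg hp.le (by norm_num))
  refine ⟨1 + C, by simp, by simp [ENNReal.add_ne_top, hCtop], ?_⟩
  intro x
  set A : ENNReal := riesz2 α σ x with hA_def
  by_cases hAtop : A = ⊤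
  · have h1e : (0:ℝ) < 1 / (1 - q) := by positivity
    rw [hAtop, ENNReal.top_rpow_of_pos h1e, top_add,
      ENNReal.mul_top (by simp : (1:ENNReal) + C ≠ 0)]
    exact le_top
  -- main case : A ≠ ⊤
  set f : EuclideanSpace ℝ (Fin n) → ENNReal := fun y => (riesz2 α σ y) ^ p with hf_def
  set K : ENNReal := c * (1 + A) ^ p with hK_def
  have hKtop : K ≠ ⊤ :=
    ENNReal.mul_ne_top hc (ENNReal.rpow_ne_top_of_nonneg hp.le
      (by simp [ENNReal.add_ne_top, hAtop]))
  -- pointwise bound on balls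
  have key : ∀ t : ℝ, 0 < t →
      (σ.withDensity f) (ball x t) ≤ K * σ (ball x (2 * t)) := by
    intro t ht
    rw [withDensity_apply _ measurableSet_ball]
    have h2t : 0 < 2 * t := by linarith
    have hh := hyp x (2 * t) h2t
    rw [show (2 * t) / 2 = t by ring] at hh
    refine hh.trans ?_
    have tail_le : (∫⁻ s in Ioi (2*t),
        σ (ball x s) / ENNReal.ofReal (s ^ ((n:ℝ) - 2 * α)) / ENNReal.ofReal s) ≤ A :=
      lintegral_mono_set (Ioi_subset_Ioi (by linarith))
    calc c * σ (ball x (2*t)) * (1 + ∫⁻ s in Ioi (2*t),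
            σ (ball x s) / ENNReal.ofReal (s ^ ((n:ℝ) - 2 * α)) / ENNReal.ofReal s) ^ p
        ≤ c * σ (ball x (2*t)) * (1 + A) ^ p := by
          exact mul_le_mul_right (ENNReal.rpow_le_rpow (add_le_add le_rfl tail_le) hp.le) _
      _ = K * σ (ball x (2*t)) := by rw [hK_def]; ring
  -- measurability of the profile function
  have hmono : Monotone (fun s : ℝ => σ (ball x s)) :=
    fun a b hab => measure_mono (ball_subset_ball hab)
  set H : ℝ → ENNReal := fun s =>
    σ (ball x s) / ENNReal.ofReal (s ^ β) / ENNReal.ofReal s with hH_def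
  have hHmeas : Measurable H := by
    apply Measurable.div
    apply Measurable.div hmono.measurable
    · exact (Real.continuous_rpow_const hβ.le).measurable.ennreal_ofReal
    · exact measurable_id.ennreal_ofReal
  have hAeq : A = ∫⁻ s in Ioi (0:ℝ), H s := rfl
  -- change of variables : ∫ H(2t) = (1/2) ∫ H
  have hcov : (∫⁻ t in Ioi (0:ℝ), H (2 * t)) = ENNReal.ofReal 2⁻¹ * A := by
    have hmap := Real.map_volume_mul_left (a := 2) (by norm_num)
    have h1 := setLIntegral_map (measurableSet_Ioi (a := (0:ℝ))) hHmeas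
      (measurable_const_mul 2) (μ := volume)
    rw [hmap] at h1
    have hpre : ((2:ℝ) * ·) ⁻¹' (Ioi (0:ℝ)) = Ioi (0:ℝ) := by
      ext s; simp only [mem_preimage, mem_Ioi]; constructor <;> intro h <;> nlinarith
    rw [hpre] at h1
    rw [← h1, hAeq, Measure.restrict_smul, lintegral_smul_measure]
    congr 1
    rw [abs_of_pos (by norm_num : (0:ℝ) < 2⁻¹)]
  -- pointwise rewrite of the dilated integrand
  have hpt : ∀ t : ℝ, 0 < t →
      σ (ball x (2 * t)) / ENNReal.ofReal (t ^ β) / ENNReal.ofReal t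
        = (u * 2) * H (2 * t) := by
    intro t ht
    have h1 : ((2:ℝ) * t) ^ β = 2 ^ β * t ^ β := Real.mul_rpow (by norm_num) ht.le
    have h2 : ENNReal.ofReal ((2:ℝ) * t) = 2 * ENNReal.ofReal t := by
      rw [ENNReal.ofReal_mul (by norm_num)]
      norm_num
    simp only [hH_def, h1, h2, ENNReal.ofReal_mul h2β.le, ← hu_def]
    rw [div_eq_mul_inv, div_eq_mul_inv, div_eq_mul_inv, div_eq_mul_inv,
      ENNReal.mul_inv (Or.inl hu0) (Or.inl hutop),
      ENNReal.mul_inv (by norm_num) (by norm_num)]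
    have e1 : u * u⁻¹ = 1 := ENNReal.mul_inv_cancel hu0 hutop
    have e2 : (2:ENNReal) * 2⁻¹ = 1 := ENNReal.mul_inv_cancel (by norm_num) (by norm_num)
    symm
    calc (u * 2) * (σ (ball x (2*t)) * (u⁻¹ * (ENNReal.ofReal (t ^ β))⁻¹) *
            ((2:ENNReal)⁻¹ * (ENNReal.ofReal t)⁻¹))
        = (u * u⁻¹) * ((2:ENNReal) * 2⁻¹) *
            (σ (ball x (2*t)) * (ENNReal.ofReal (t ^ β))⁻¹ * (ENNReal.ofReal t)⁻¹) := by ring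
      _ = σ (ball x (2*t)) * (ENNReal.ofReal (t ^ β))⁻¹ * (ENNReal.ofReal t)⁻¹ := by
          rw [e1, e2]; ring
    -- orientation: goal is LHS = (u*2) * H(2t); the calc proves the symm; adjust below
  -- main estimate
  have main : riesz2 α (σ.withDensity f) x ≤ K * (u * A) := by
    have step1 : riesz2 α (σ.withDensity f) x
        ≤ ∫⁻ t in Ioi (0:ℝ), K * (σ (ball x (2*t)) / ENNReal.ofReal (t ^ β) / ENNReal.ofReal t) := by
      refine setLIntegral_mono' measurableSet_Ioi ?_
      intro t ht
      have ht' : 0 < t := ht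
      calc (σ.withDensity f) (ball x t) / ENNReal.ofReal (t ^ β) / ENNReal.ofReal t
          ≤ (K * σ (ball x (2*t))) / ENNReal.ofReal (t ^ β) / ENNReal.ofReal t := by
            exact ENNReal.div_le_div_right (ENNReal.div_le_div_right (key t ht') _) _
        _ = K * (σ (ball x (2*t)) / ENNReal.ofReal (t ^ β) / ENNReal.ofReal t) := by
            rw [mul_div_assoc, mul_div_assoc]
    refine step1.trans ?_
    have step2 : (∫⁻ t in Ioi (0:ℝ),
        K * (σ (ball x (2*t)) / ENNReal.ofReal (t ^ β) / ENNReal.ofReal t))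
        = K * ∫⁻ t in Ioi (0:ℝ), σ (ball x (2*t)) / ENNReal.ofReal (t ^ β) / ENNReal.ofReal t :=
      lintegral_const_mul' _ _ hKtop
    rw [step2]
    refine mul_le_mul_right ?_ K
    have step3 : (∫⁻ t in Ioi (0:ℝ),
        σ (ball x (2*t)) / ENNReal.ofReal (t ^ β) / ENNReal.ofReal t)
        = ∫⁻ t in Ioi (0:ℝ), (u * 2) * H (2 * t) := by
      refine setLIntegral_congr_fun measurableSet_Ioi ?_
      intro t ht
      exact hpt t ht
    rw [step3, lintegral_const_mul' _ _ (by finiteness), hcov]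
    have : (u * 2) * (ENNReal.ofReal 2⁻¹ * A) = u * A := by
      rw [ENNReal.ofReal_inv_of_pos (by norm_num)]
      have e2 : (2:ENNReal) * (ENNReal.ofReal 2)⁻¹ = 1 := by
        norm_num
        exact ENNReal.mul_inv_cancel (by norm_num) (by norm_num)
      calc (u * 2) * ((ENNReal.ofReal 2)⁻¹ * A)
          = ((2:ENNReal) * (ENNReal.ofReal 2)⁻¹) * (u * A) := by ring
        _ = u * A := by rw [e2, one_mul]
    rw [this]
  -- final algebra
  refine main.trans ?_
  have hsum : (1 ⊔ A) ^ p * A ≤ A + A ^ (1 / (1 - q)) := by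
    rcases le_total A 1 with h | h
    · rw [sup_eq_left.mpr h, ENNReal.one_rpow, one_mul]
      exact le_self_add
    · rw [sup_eq_right.mpr h]
      have hexp : p + 1 = 1 / (1 - q) := by
        rw [hp_def]
        field_simp
        ring
      calc A ^ p * A = A ^ p * A ^ (1:ℝ) := by rw [ENNReal.rpow_one]
        _ = A ^ (p + 1) := (ENNReal.rpow_add_of_nonneg p 1 hp.le zero_le_one).symm
        _ = A ^ (1 / (1 - q)) := by rw [hexp]
        _ ≤ A + A ^ (1 / (1 - q)) := le_add_self
  have hbase : (1 + A) ^ p ≤ (2:ENNReal) ^ p * (1 ⊔ A) ^ p := by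
    rw [← ENNReal.mul_rpow_of_nonneg _ _ hp.le]
    refine ENNReal.rpow_le_rpow ?_ hp.le
    calc (1:ENNReal) + A ≤ (1 ⊔ A) + (1 ⊔ A) := add_le_add le_sup_left le_sup_right
      _ = 2 * (1 ⊔ A) := (two_mul _).symm
  calc K * (u * A) = c * (1 + A) ^ p * (u * A) := by rw [hK_def]
    _ ≤ c * ((2:ENNReal) ^ p * (1 ⊔ A) ^ p) * (u * A) := by
        exact mul_le_mul_left (mul_le_mul_right hbase c) _
    _ = C * ((1 ⊔ A) ^ p * A) := by rw [hC_def]; ring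
    _ ≤ C * (A + A ^ (1 / (1 - q))) := mul_le_mul_right hsum C
    _ ≤ (1 + C) * (A + A ^ (1 / (1 - q))) := by
        exact mul_le_mul_left (le_add_self) _
end

section
/- Let 0 < q < p-1, 1 < p < ∞, 0 < α < n/p, and let σ be a nonnegative locally finite Borel measure on ℝⁿ with W_{α,p}σ not identically infinite. Then there exists a constant c₀ > 0 depending only on n, p, q, α such that w = c₀ (W_{α,p}σ)^{(p-1)/(p-1-q)} satisfies w ≤ W_{α,p}(w^q dσ) everywhere, i.e. w is a subsolution of the equation u = W_{α,p}(u^q dσ). -/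
open MeasureTheory Metric Set

open Filter
open scoped ENNReal Topology

section AuxLemmas

lemma iSup_rpow_mono {c : ℝ} (hc : 0 ≤ c) (b : ℕ → ℝ≥0∞) (hb : Monotone b) :
    (⨆ n, b n) ^ c = ⨆ n, (b n) ^ c := by
  have h1 : Tendsto b atTop (𝓝 (⨆ n, b n)) := tendsto_atTop_iSup hb
  have h2 : Tendsto (fun n => (b n) ^ c) atTop (𝓝 ((⨆ n, b n) ^ c)) :=
    (ENNReal.continuous_rpow_const.tendsto _).comp h1
  have h3 : Tendsto (fun n => (b n) ^ c) atTop (𝓝 (⨆ n, (b n) ^ c)) :=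
    tendsto_atTop_iSup (fun i j hij => ENNReal.rpow_le_rpow (hb hij) hc)
  exact tendsto_nhds_unique h2 h3

lemma key_finite (f : ℝ → ℝ≥0∞) (hf : Measurable f) {β : ℝ} (hβ : 0 ≤ β)
    (hfin : ∫⁻ t in Ioi (0:ℝ), f t ≠ ⊤) :
    ((∫⁻ t in Ioi (0:ℝ), f t) / 2) ^ (1 + β)
      ≤ ∫⁻ t in Ioi (0:ℝ), f t * (∫⁻ s in Ioi t, f s) ^ β := by
  set f' : ℝ → ℝ≥0∞ := (Ioi (0:ℝ)).indicator f with hf'def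
  have hf'm : Measurable f' := hf.indicator measurableSet_Ioi
  set ν : Measure ℝ := volume.withDensity f' with hνdef
  have hν : ∀ t : ℝ, 0 ≤ t → ν (Ioi t) = ∫⁻ s in Ioi t, f s := by
    intro t ht
    rw [hνdef, withDensity_apply _ measurableSet_Ioi]
    refine setLIntegral_congr_fun measurableSet_Ioi (fun s hs => ?_)
    exact indicator_of_mem (lt_of_le_of_lt ht hs) f
  have hνIoo : ∀ a b : ℝ, 0 ≤ a → ν (Ioo a b) = ∫⁻ s in Ioo a b, f s := by
    intro a b ha
    rw [hνdef, withDensity_apply _ measurableSet_Ioo]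
    refine setLIntegral_congr_fun measurableSet_Ioo (fun s hs => ?_)
    exact indicator_of_mem (lt_of_le_of_lt ha hs.1) f
  have hG0 : ν (Ioi 0) = ∫⁻ t in Ioi (0:ℝ), f t := hν 0 le_rfl
  set G0 := ν (Ioi (0:ℝ)) with hG0def
  have hG0top : G0 ≠ ⊤ := by rw [hG0]; exact hfin
  rw [← hG0]
  rcases eq_or_ne G0 0 with h0 | h0
  · rw [h0]
    simp only [ENNReal.zero_div]
    rw [ENNReal.zero_rpow_of_pos (by linarith)]
    exact zero_le
  -- main case
  have hmono : ∀ {a b : ℝ}, a ≤ b → ν (Ioi b) ≤ ν (Ioi a) :=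
    fun h => measure_mono (Ioi_subset_Ioi h)
  have hhalf_pos : 0 < G0 / 2 := ENNReal.div_pos h0 (by norm_num)
  have hhalf_top : G0 / 2 ≠ ⊤ := by
    exact (ENNReal.div_lt_top hG0top (by norm_num)).ne
  -- tendsto 0
  have hempty : (⋂ m : ℕ, Ioi (m:ℝ)) = ∅ := by
    ext u
    simp only [mem_iInter, mem_Ioi, mem_empty_iff_false, iff_false, not_forall, not_lt]
    obtain ⟨m, hm⟩ := exists_nat_gt u
    exact ⟨m, hm.le⟩
  have htend : Tendsto (fun m : ℕ => ν (Ioi (m:ℝ))) atTop (𝓝 0) := by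
    have := tendsto_measure_iInter_atTop (μ := ν) (s := fun m : ℕ => Ioi (m:ℝ))
      (fun m => measurableSet_Ioi.nullMeasurableSet)
      (fun i j hij => Ioi_subset_Ioi (by exact_mod_cast hij))
      ⟨0, by simpa using hG0top⟩
    rw [hempty] at this
    simpa [Function.comp_def] using this
  obtain ⟨m, hm⟩ := (htend.eventually (gt_mem_nhds hhalf_pos)).exists
  set S : Set ℝ := {t : ℝ | 0 < t ∧ ν (Ioi t) ≤ G0 / 2} with hSdef
  have hSne : S.Nonempty := ⟨(m:ℝ) + 1, by positivity,
    le_trans (hmono (by linarith)) hm.le⟩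
  have hSbdd : BddBelow S := ⟨0, fun t ht => ht.1.le⟩
  set s := sInf S with hsdef
  have hs0 : 0 ≤ s := le_csInf hSne fun t ht => ht.1.le
  have hstep : ∀ u : ℝ, s < u → ν (Ioi u) ≤ G0 / 2 := by
    intro u hu
    obtain ⟨t, htS, htlt⟩ := (csInf_lt_iff hSbdd hSne).mp hu
    exact le_trans (hmono htlt.le) htS.2
  have hνs : ν (Ioi s) ≤ G0 / 2 := by
    have hIoi : Ioi s = ⋃ m : ℕ, Ioi (s + ((m:ℝ)+1)⁻¹) := by
      ext u
      simp only [mem_Ioi, mem_iUnion]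
      constructor
      · intro hu
        obtain ⟨k, hk⟩ := exists_nat_gt (u - s)⁻¹
        refine ⟨k, ?_⟩
        have h1 : 0 < u - s := by linarith
        have h2 : (u - s)⁻¹ < (k:ℝ) + 1 := by linarith [hk]
        have h3 : ((k:ℝ)+1)⁻¹ < u - s := by
          rw [inv_lt_comm₀ (by positivity) h1]
          exact h2
        linarith
      · rintro ⟨k, hk⟩
        have : (0:ℝ) < ((k:ℝ)+1)⁻¹ := by positivity
        linarith
    rw [hIoi]
    rw [Monotone.measure_iUnion (fun i j hij => Ioi_subset_Ioi (by
      have : ((j:ℝ)+1)⁻¹ ≤ ((i:ℝ)+1)⁻¹ := by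
        apply inv_anti₀ (by positivity)
        exact_mod_cast (by exact_mod_cast add_le_add_left (Nat.cast_le.mpr hij) 1)
      linarith))]
    exact iSup_le fun k => hstep _ (lt_add_of_pos_right s (by positivity))
  have hspos : 0 < s := by
    rcases hs0.lt_or_eq with h | h
    · exact h
    exfalso
    have hall : ∀ u : ℝ, 0 < u → ν (Ioi u) ≤ G0 / 2 := fun u hu => hstep u (h ▸ hu)
    have hU : Ioi (0:ℝ) = ⋃ m : ℕ, Ioi (((m:ℝ)+1)⁻¹) := by
      ext u
      simp only [mem_Ioi, mem_iUnion]
      constructor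
      · intro hu
        obtain ⟨k, hk⟩ := exists_nat_gt u⁻¹
        refine ⟨k, ?_⟩
        have h2 : u⁻¹ < (k:ℝ) + 1 := by linarith
        rw [inv_lt_comm₀ hu (by positivity)] at h2
        exact h2
      · rintro ⟨k, hk⟩
        have : (0:ℝ) < ((k:ℝ)+1)⁻¹ := by positivity
        linarith
    have hle : G0 ≤ G0 / 2 := by
      calc G0 = ν (⋃ m : ℕ, Ioi (((m:ℝ)+1)⁻¹)) := by rw [hG0def, hU]
        _ = ⨆ m : ℕ, ν (Ioi (((m:ℝ)+1)⁻¹)) :=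
            Monotone.measure_iUnion (fun i j hij => Ioi_subset_Ioi (by
              apply inv_anti₀ (by positivity)
              exact_mod_cast add_le_add_left (Nat.cast_le.mpr hij) 1))
        _ ≤ G0 / 2 := iSup_le fun k => hall _ (by positivity)
    exact absurd hle (not_le.mpr (ENNReal.half_lt_self h0 hG0top))
  -- decomposition
  have hνpt : ν {s} = 0 :=
    withDensity_absolutelyContinuous volume f' (Real.volume_singleton)
  have hIci : ν (Ici s) = ν (Ioi s) := by
    apply le_antisymm
    · have hset : Ici s = {s} ∪ Ioi s := by
        ext u
        simp only [mem_Ici, mem_union, mem_singleton_iff, mem_Ioi]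
        constructor
        · intro h'; rcases h'.lt_or_eq with h'' | h''
          · exact Or.inr h''
          · exact Or.inl h''.symm
        · rintro (rfl | h') <;> [exact le_rfl; exact h'.le]
      calc ν (Ici s) = ν ({s} ∪ Ioi s) := by rw [hset]
        _ ≤ ν {s} + ν (Ioi s) := measure_union_le _ _
        _ = ν (Ioi s) := by rw [hνpt, zero_add]
    · exact measure_mono Ioi_subset_Ici_self
  have hdecomp : G0 = ν (Ioo 0 s) + ν (Ioi s) := by
    have hdisj : Disjoint (Ioo (0:ℝ) s) (Ici s) :=
      Set.disjoint_left.mpr fun u hu hu' => absurd hu.2 (not_lt.mpr hu')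
    rw [hG0def, ← Ioo_union_Ici_eq_Ioi hspos, measure_union hdisj measurableSet_Ici, hIci]
  have hOoo : G0 / 2 ≤ ν (Ioo 0 s) := by
    by_contra hlt
    push_neg at hlt
    have h1 : G0 < G0 / 2 + G0 / 2 := by
      calc G0 = ν (Ioo 0 s) + ν (Ioi s) := hdecomp
        _ ≤ ν (Ioo 0 s) + G0 / 2 := add_le_add_right hνs _
        _ < G0 / 2 + G0 / 2 := ENNReal.add_lt_add_right hhalf_top hlt
    rw [ENNReal.add_halves] at h1
    exact lt_irrefl _ h1
  -- final chain
  have hpt : ∀ t ∈ Ioo (0:ℝ) s, f t * (G0 / 2) ^ β ≤ f t * (∫⁻ u in Ioi t, f u) ^ β := by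
    intro t ht
    have htS : t ∉ S := notMem_of_lt_csInf ht.2 hSbdd
    have : G0 / 2 < ν (Ioi t) := by
      by_contra hc
      push_neg at hc
      exact htS ⟨ht.1, hc⟩
    rw [← hν t ht.1.le]
    exact mul_le_mul_right (ENNReal.rpow_le_rpow this.le hβ) _
  calc (G0 / 2) ^ (1 + β) = (G0 / 2) ^ (1:ℝ) * (G0 / 2) ^ β := by
        rw [← ENNReal.rpow_add _ _ (by positivity) hhalf_top]
    _ = (G0 / 2) * (G0 / 2) ^ β := by rw [ENNReal.rpow_one]
    _ ≤ ν (Ioo 0 s) * (G0 / 2) ^ β := mul_le_mul_left hOoo _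
    _ = (∫⁻ t in Ioo 0 s, f t) * (G0 / 2) ^ β := by rw [hνIoo 0 s le_rfl]
    _ = ∫⁻ t in Ioo 0 s, f t * (G0 / 2) ^ β := (lintegral_mul_const _ hf).symm
    _ ≤ ∫⁻ t in Ioo 0 s, f t * (∫⁻ u in Ioi t, f u) ^ β :=
        setLIntegral_mono' measurableSet_Ioo hpt
    _ ≤ ∫⁻ t in Ioi 0, f t * (∫⁻ u in Ioi t, f u) ^ β :=
        lintegral_mono' (Measure.restrict_mono Ioo_subset_Ioi_self le_rfl) le_rfl

lemma key (f : ℝ → ℝ≥0∞) (hf : Measurable f) {β : ℝ} (hβ : 0 ≤ β) :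
    ((∫⁻ t in Ioi (0:ℝ), f t) / 2) ^ (1 + β)
      ≤ ∫⁻ t in Ioi (0:ℝ), f t * (∫⁻ s in Ioi t, f s) ^ β := by
  set g : ℕ → ℝ → ℝ≥0∞ :=
    fun m t => (Ioc ((m:ℝ))⁻¹ (m:ℝ)).indicator (fun u => min (f u) (m:ℝ≥0∞)) t with hgdef
  have hg_meas : ∀ m, Measurable (g m) :=
    fun m => (hf.min measurable_const).indicator measurableSet_Ioc
  have hg_le : ∀ m t, g m t ≤ f t := by
    intro m t
    refine le_trans (Set.indicator_le_self _ _ t) (min_le_left _ _)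
  have hmem_mono : ∀ {i j : ℕ}, i ≤ j → ∀ {t : ℝ}, t ∈ Ioc ((i:ℝ))⁻¹ (i:ℝ) →
      t ∈ Ioc ((j:ℝ))⁻¹ (j:ℝ) := by
    intro i j hij t ht
    have hi1 : (1:ℝ) ≤ (i:ℝ) := by
      rcases Nat.eq_zero_or_pos i with rfl | hpos
      · exfalso
        rw [Nat.cast_zero, inv_zero] at ht
        exact absurd (ht.1.trans_le ht.2) (lt_irrefl 0)
      · exact_mod_cast hpos
    have hij' : (i:ℝ) ≤ (j:ℝ) := by exact_mod_cast hij
    constructor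
    · calc ((j:ℝ))⁻¹ ≤ ((i:ℝ))⁻¹ := inv_anti₀ (by linarith) hij'
        _ < t := ht.1
    · exact ht.2.trans hij'
  have hg_mono : Monotone g := by
    intro i j hij t
    by_cases ht : t ∈ Ioc ((i:ℝ))⁻¹ (i:ℝ)
    · rw [hgdef]
      simp only []
      rw [Set.indicator_of_mem ht, Set.indicator_of_mem (hmem_mono hij ht)]
      exact min_le_min le_rfl (by exact_mod_cast Nat.cast_le.mpr hij)
    · rw [hgdef]; simp only []
      rw [Set.indicator_of_notMem ht]
      exact zero_le
  have hsup : ∀ t ∈ Ioi (0:ℝ), (⨆ m, g m t) = f t := by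
    intro t ht
    apply le_antisymm (iSup_le fun m => hg_le m t)
    have hminsup : (⨆ m : ℕ, min (f t) (m:ℝ≥0∞)) = f t := by
      apply le_antisymm (iSup_le fun m => min_le_left _ _)
      rcases eq_or_ne (f t) ⊤ with h | h
      · rw [h]
        have : (⨆ m : ℕ, min (⊤:ℝ≥0∞) (m:ℝ≥0∞)) = ⨆ m : ℕ, (m:ℝ≥0∞) := by
          refine iSup_congr fun m => min_eq_right le_top
        rw [this, ENNReal.iSup_natCast]
      · obtain ⟨m, hm⟩ := ENNReal.exists_nat_gt h
        exact le_iSup_of_le m (le_min le_rfl hm.le)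
    -- find k with membership for all m ≥ k
    obtain ⟨k, hk⟩ := exists_nat_gt (max t t⁻¹)
    have hmem : ∀ m : ℕ, k ≤ m → t ∈ Ioc ((m:ℝ))⁻¹ (m:ℝ) := by
      intro m hm
      have hkm : (k:ℝ) ≤ (m:ℝ) := by exact_mod_cast hm
      have h1 : t⁻¹ < (m:ℝ) := lt_of_le_of_lt (le_max_right _ _) (hk.trans_le hkm)
      have h2 : t < (m:ℝ) := lt_of_le_of_lt (le_max_left _ _) (hk.trans_le hkm)
      have ht0 : (0:ℝ) < t := ht
      have hm0 : (0:ℝ) < (m:ℝ) := lt_trans (inv_pos.mpr ht0) h1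
      refine ⟨?_, h2.le⟩
      rw [inv_lt_comm₀ hm0 ht0]
      exact h1
    calc f t = ⨆ m : ℕ, min (f t) (m:ℝ≥0∞) := hminsup.symm
      _ ≤ ⨆ m : ℕ, g (m + k) t := by
          refine iSup_mono fun m => ?_
          rw [hgdef]; simp only []
          rw [Set.indicator_of_mem (hmem (m+k) (Nat.le_add_left _ _))]
          exact min_le_min le_rfl (by exact_mod_cast Nat.cast_le.mpr (Nat.le_add_right m k))
      _ ≤ ⨆ m, g m t := iSup_le fun m => le_iSup (fun m => g m t) (m + k)
  have hfinm : ∀ m : ℕ, ∫⁻ t in Ioi (0:ℝ), g m t ≠ ⊤ := by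
    intro m
    have hb : ∀ t, g m t ≤ (Ioc ((m:ℝ))⁻¹ (m:ℝ)).indicator (fun _ => (m:ℝ≥0∞)) t := by
      intro t
      by_cases ht : t ∈ Ioc ((m:ℝ))⁻¹ (m:ℝ)
      · rw [hgdef]; simp only []
        rw [Set.indicator_of_mem ht, Set.indicator_of_mem ht]
        exact min_le_right _ _
      · rw [hgdef]; simp only []
        rw [Set.indicator_of_notMem ht, Set.indicator_of_notMem ht]
    have hle : ∫⁻ t in Ioi (0:ℝ), g m t
        ≤ (m:ℝ≥0∞) * volume (Ioc ((m:ℝ))⁻¹ (m:ℝ)) := by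
      calc ∫⁻ t in Ioi (0:ℝ), g m t ≤ ∫⁻ t, g m t := setLIntegral_le_lintegral _ _
        _ ≤ ∫⁻ t, (Ioc ((m:ℝ))⁻¹ (m:ℝ)).indicator (fun _ => (m:ℝ≥0∞)) t :=
            lintegral_mono hb
        _ = (m:ℝ≥0∞) * volume (Ioc ((m:ℝ))⁻¹ (m:ℝ)) := by
            rw [lintegral_indicator measurableSet_Ioc, setLIntegral_const]
    refine ne_top_of_le_ne_top ?_ hle
    rw [Real.volume_Ioc]
    exact ENNReal.mul_ne_top (ENNReal.natCast_ne_top m) ENNReal.ofReal_ne_top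
  have hstep : ∀ m : ℕ, ((∫⁻ t in Ioi (0:ℝ), g m t) / 2) ^ (1+β)
      ≤ ∫⁻ t in Ioi (0:ℝ), f t * (∫⁻ s in Ioi t, f s) ^ β := by
    intro m
    refine le_trans (key_finite (g m) (hg_meas m) hβ (hfinm m)) ?_
    refine lintegral_mono fun t => ?_
    exact mul_le_mul' (hg_le m t)
      (ENNReal.rpow_le_rpow (lintegral_mono fun s => hg_le m s) hβ)
  have hI : ∫⁻ t in Ioi (0:ℝ), f t = ⨆ m, ∫⁻ t in Ioi (0:ℝ), g m t := by
    calc ∫⁻ t in Ioi (0:ℝ), f t = ∫⁻ t in Ioi (0:ℝ), ⨆ m, g m t :=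
          setLIntegral_congr_fun measurableSet_Ioi (fun t ht => (hsup t ht).symm)
      _ = ⨆ m, ∫⁻ t in Ioi (0:ℝ), g m t := lintegral_iSup hg_meas hg_mono
  rw [hI, ENNReal.iSup_div, iSup_rpow_mono (by linarith) _
    (fun i j hij => ENNReal.div_le_div_right (lintegral_mono fun t => hg_mono hij t) 2)]
  exact iSup_le hstep

end AuxLemmas

theorem stmt19 {n : ℕ} (α p q : ℝ) (σ : Measure (EuclideanSpace ℝ (Fin n)))
    [IsLocallyFiniteMeasure σ]
    (hp : 1 < p) (hα : 0 < α) (hαn : α < n / p) (hq : 0 < q) (hqp : q < p - 1)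
    (hW : ∃ x, wolff α p σ x ≠ ⊤) :
    ∃ c₀ : ENNReal, 0 < c₀ ∧ c₀ ≠ ⊤ ∧
      ∀ x : EuclideanSpace ℝ (Fin n),
        c₀ * (wolff α p σ x) ^ ((p - 1) / (p - 1 - q))
          ≤ wolff α p
              (σ.withDensity fun y =>
                (c₀ * (wolff α p σ y) ^ ((p - 1) / (p - 1 - q))) ^ q) x := by
  have hp1 : (0:ℝ) < p - 1 := by linarith
  have hpq : (0:ℝ) < p - 1 - q := by linarith
  set κ : ℝ := (n:ℝ) - α * p with hκdef
  set e : ℝ := 1 / (p - 1) with hedef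
  set γ : ℝ := (p - 1) / (p - 1 - q) with hγdef
  set β : ℝ := q / (p - 1 - q) with hβdef
  have he : 0 < e := by rw [hedef]; positivity
  have hγpos : 0 < γ := by rw [hγdef]; positivity
  have hβpos : 0 < β := by rw [hβdef]; positivity
  have hκpos : 0 < κ := by
    have hp0 : (0:ℝ) < p := by linarith
    have h1 : α * p < (n:ℝ) := (lt_div_iff₀ hp0).mp hαn
    rw [hκdef]; linarith
  have hid1 : γ * (q * e) = β := by
    rw [hγdef, hedef, hβdef]; field_simp
  have hid2 : 1 + β = γ := by
    rw [hγdef, hβdef]; field_simp; ring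
  -- constants
  set A : ℝ≥0∞ := ENNReal.ofReal (2 ^ κ) with hAdef
  have hA0 : A ≠ 0 := by
    rw [hAdef, Ne, ENNReal.ofReal_eq_zero, not_le]
    exact Real.rpow_pos_of_pos (by norm_num) κ
  have hAt : A ≠ ⊤ := ENNReal.ofReal_ne_top
  have hAe0 : A ^ e ≠ 0 := (ENNReal.rpow_pos (pos_iff_ne_zero.mpr hA0) hAt).ne'
  have hAet : A ^ e ≠ ⊤ := ENNReal.rpow_ne_top_of_nonneg he.le hAt
  set cI : ℝ≥0∞ := (A ^ e * 2)⁻¹ with hcIdef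
  have hcI0 : cI ≠ 0 := by
    rw [hcIdef]
    exact ENNReal.inv_ne_zero.mpr (ENNReal.mul_ne_top hAet (by norm_num))
  have hcIt : cI ≠ ⊤ := by
    rw [hcIdef]
    exact ENNReal.inv_ne_top.mpr (mul_ne_zero hAe0 (by norm_num))
  set cB : ℝ≥0∞ := 2 * cI with hcBdef
  have hcB0 : cB ≠ 0 := mul_ne_zero (by norm_num) hcI0
  have hcBt : cB ≠ ⊤ := ENNReal.mul_ne_top (by norm_num) hcIt
  set K : ℝ≥0∞ := cB ^ β * ((2:ℝ≥0∞) ^ γ)⁻¹ with hKdef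
  have h2γ0 : ((2:ℝ≥0∞) ^ γ) ≠ 0 := (ENNReal.rpow_pos (by norm_num) (by norm_num)).ne'
  have h2γt : ((2:ℝ≥0∞) ^ γ) ≠ ⊤ := ENNReal.rpow_ne_top_of_nonneg hγpos.le (by norm_num)
  have hK0 : K ≠ 0 :=
    mul_ne_zero (ENNReal.rpow_pos (pos_iff_ne_zero.mpr hcB0) hcBt).ne'
      (ENNReal.inv_ne_zero.mpr h2γt)
  have hKt : K ≠ ⊤ :=
    ENNReal.mul_ne_top (ENNReal.rpow_ne_top_of_nonneg hβpos.le hcBt)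
      (ENNReal.inv_ne_top.mpr h2γ0)
  set c₀ : ℝ≥0∞ := K ^ γ with hc₀def
  have hc₀0 : 0 < c₀ := ENNReal.rpow_pos (pos_iff_ne_zero.mpr hK0) hKt
  have hc₀t : c₀ ≠ ⊤ := ENNReal.rpow_ne_top_of_nonneg hγpos.le hKt
  refine ⟨c₀, hc₀0, hc₀t, ?_⟩
  intro x
  -- setup
  set μ : Measure (EuclideanSpace ℝ (Fin n)) :=
    σ.withDensity fun y => (c₀ * (wolff α p σ y) ^ γ) ^ q with hμdef
  have hfm : ∀ z : EuclideanSpace ℝ (Fin n),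
      Measurable fun t : ℝ => (σ (ball z t) / ENNReal.ofReal (t ^ κ)) ^ e /
        ENNReal.ofReal t := by
    intro z
    have hmono : Monotone fun t : ℝ => σ (ball z t) :=
      fun a b hab => measure_mono (ball_subset_ball hab)
    refine Measurable.div ?_ (ENNReal.measurable_ofReal.comp measurable_id)
    exact (ENNReal.continuous_rpow_const.measurable).comp
      (hmono.measurable.div
        (ENNReal.measurable_ofReal.comp (Real.continuous_rpow_const hκpos.le).measurable))
  set f : ℝ → ℝ≥0∞ :=
    fun t => (σ (ball x t) / ENNReal.ofReal (t ^ κ)) ^ e / ENNReal.ofReal t with hfdef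
  have hfmeas : Measurable f := hfm x
  set G : ℝ → ℝ≥0∞ := fun t => ∫⁻ s in Ioi t, f s with hGdef
  have hGanti : Antitone G := fun a b hab =>
    lintegral_mono' (Measure.restrict_mono (Ioi_subset_Ioi hab) le_rfl) le_rfl
  have hGmeas : Measurable G := hGanti.measurable
  have hWx : wolff α p σ x = G 0 := rfl
  -- Step 1
  have hstep1 : ∀ t : ℝ, 0 < t → ∀ y ∈ ball x t, cB * G t ≤ wolff α p σ y := by
    intro t ht y hy
    set h : ℝ → ℝ≥0∞ :=
      fun s => (σ (ball y s) / ENNReal.ofReal (s ^ κ)) ^ e / ENNReal.ofReal s with hhdef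
    have hhmeas : Measurable h := hfm y
    have hpre : (fun r : ℝ => 2 * r) ⁻¹' (Ioi (2 * t)) = Ioi t := by
      ext r
      simp only [mem_preimage, mem_Ioi]
      constructor <;> intro <;> linarith
    have hmapped : ∫⁻ r in Ioi t, h (2 * r)
        = ENNReal.ofReal |(2:ℝ)⁻¹| * ∫⁻ s in Ioi (2 * t), h s := by
      calc ∫⁻ r in Ioi t, h (2 * r)
          = ∫⁻ r in (fun r : ℝ => 2 * r) ⁻¹' (Ioi (2 * t)), h (2 * r) := by rw [hpre]
        _ = ∫⁻ s in Ioi (2 * t), h s ∂(Measure.map (fun r : ℝ => 2 * r) volume) :=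
            (setLIntegral_map measurableSet_Ioi hhmeas (measurable_id.const_mul 2)).symm
        _ = ENNReal.ofReal |(2:ℝ)⁻¹| * ∫⁻ s in Ioi (2 * t), h s := by
            rw [Real.map_volume_mul_left (two_ne_zero), Measure.restrict_smul,
              lintegral_smul_measure, smul_eq_mul]
    have hchange : 2 * ∫⁻ r in Ioi t, h (2 * r) = ∫⁻ s in Ioi (2 * t), h s := by
      rw [hmapped, ← mul_assoc]
      have h21 : (2:ℝ≥0∞) * ENNReal.ofReal |(2:ℝ)⁻¹| = 1 := by
        rw [abs_of_pos (by norm_num : (0:ℝ) < 2⁻¹),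
          show (2:ℝ≥0∞) = ENNReal.ofReal 2 by simp,
          ← ENNReal.ofReal_mul (by norm_num)]
        norm_num
      rw [h21, one_mul]
    have hpt : ∀ r ∈ Ioi t, cI * f r ≤ h (2 * r) := by
      intro r hr
      rw [mem_Ioi] at hr
      have hr0 : 0 < r := ht.trans hr
      have hball : ball x r ⊆ ball y (2 * r) := by
        intro z hz
        rw [mem_ball] at hz hy ⊢
        calc dist z y ≤ dist z x + dist x y := dist_triangle z x y
          _ < r + t := by
              have := hy
              rw [dist_comm x y]
              exact add_lt_add hz this
          _ ≤ 2 * r := by linarith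
      have hA2r : ENNReal.ofReal ((2 * r) ^ κ) = A * ENNReal.ofReal (r ^ κ) := by
        rw [Real.mul_rpow (by norm_num) hr0.le, hAdef,
          ← ENNReal.ofReal_mul (by positivity)]
      have h2r : ENNReal.ofReal (2 * r) = 2 * ENNReal.ofReal r := by
        rw [ENNReal.ofReal_mul (by norm_num)]
        norm_num
      set B : ℝ≥0∞ := ENNReal.ofReal (r ^ κ) with hBdef
      set R : ℝ≥0∞ := ENNReal.ofReal r with hRdef
      set Sx : ℝ≥0∞ := σ (ball x r) with hSxdef
      set Sy : ℝ≥0∞ := σ (ball y (2 * r)) with hSydef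
      have hσle : Sx ≤ Sy := measure_mono hball
      have hhval : h (2 * r) = Sy ^ e / (A ^ e * B ^ e) / (2 * R) := by
        rw [hhdef]
        simp only []
        rw [hA2r, h2r, ENNReal.div_rpow_of_nonneg _ _ he.le,
          ENNReal.mul_rpow_of_nonneg _ _ he.le]
      have hfval : f r = Sx ^ e / B ^ e / R := by
        rw [hfdef]
        simp only []
        rw [ENNReal.div_rpow_of_nonneg _ _ he.le]
      rw [hhval, hfval]
      have halg : cI * (Sy ^ e / B ^ e / R) = Sy ^ e / (A ^ e * B ^ e) / (2 * R) := by
        rw [hcIdef, div_eq_mul_inv, div_eq_mul_inv, div_eq_mul_inv, div_eq_mul_inv,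
          ENNReal.mul_inv (Or.inl hAe0) (Or.inl hAet),
          ENNReal.mul_inv (Or.inl hAe0) (Or.inl hAet),
          ENNReal.mul_inv (Or.inl (by norm_num)) (Or.inl (by norm_num))]
        ring
      rw [← halg]
      exact mul_le_mul_right (ENNReal.div_le_div_right
        (ENNReal.div_le_div_right (ENNReal.rpow_le_rpow hσle he.le) _) _) _
    calc cB * G t = 2 * (cI * G t) := by rw [hcBdef, mul_assoc]
      _ = 2 * ∫⁻ r in Ioi t, cI * f r := by
          rw [hGdef]
          simp only []
          rw [lintegral_const_mul cI hfmeas]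
      _ ≤ 2 * ∫⁻ r in Ioi t, h (2 * r) :=
          mul_le_mul_right (setLIntegral_mono' measurableSet_Ioi hpt) 2
      _ = ∫⁻ s in Ioi (2 * t), h s := hchange
      _ ≤ ∫⁻ s in Ioi (0:ℝ), h s :=
          lintegral_mono' (Measure.restrict_mono (Ioi_subset_Ioi (by linarith)) le_rfl) le_rfl
      _ = wolff α p σ y := rfl
  -- Step 2
  set D : ℝ≥0∞ := (c₀ * cB ^ γ) ^ q with hDdef
  have hstep2 : ∀ t : ℝ, 0 < t →
      D * (G t) ^ (γ * q) * σ (ball x t) ≤ μ (ball x t) := by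
    intro t ht
    have hconst : (c₀ * (cB * G t) ^ γ) ^ q = D * (G t) ^ (γ * q) := by
      rw [ENNReal.mul_rpow_of_nonneg cB (G t) hγpos.le, ← mul_assoc,
        ENNReal.mul_rpow_of_nonneg _ _ hq.le, hDdef, ← ENNReal.rpow_mul]
    rw [hμdef, withDensity_apply _ measurableSet_ball]
    calc D * (G t) ^ (γ * q) * σ (ball x t)
        = ∫⁻ _ in ball x t, D * (G t) ^ (γ * q) ∂σ := (setLIntegral_const _ _).symm
      _ ≤ ∫⁻ y in ball x t, (c₀ * (wolff α p σ y) ^ γ) ^ q ∂σ := by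
          refine setLIntegral_mono' measurableSet_ball fun y hy => ?_
          rw [← hconst]
          exact ENNReal.rpow_le_rpow
            (mul_le_mul_right
              (ENNReal.rpow_le_rpow (hstep1 t ht y hy) hγpos.le) c₀) hq.le
  -- Step 3
  have hstep3 : ∀ t ∈ Ioi (0:ℝ),
      D ^ e * (f t * (G t) ^ β)
        ≤ (μ (ball x t) / ENNReal.ofReal (t ^ κ)) ^ e / ENNReal.ofReal t := by
    intro t ht
    rw [mem_Ioi] at ht
    have h1 : ((D * (G t) ^ (γ * q) * σ (ball x t)) / ENNReal.ofReal (t ^ κ)) ^ e /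
        ENNReal.ofReal t
        ≤ (μ (ball x t) / ENNReal.ofReal (t ^ κ)) ^ e / ENNReal.ofReal t :=
      ENNReal.div_le_div_right
        (ENNReal.rpow_le_rpow (ENNReal.div_le_div_right (hstep2 t ht) _) he.le) _
    refine le_trans (le_of_eq ?_) h1
    have hexp : (γ * q) * e = β := by rw [mul_assoc]; exact hid1
    have hft : f t = (σ (ball x t) / ENNReal.ofReal (t ^ κ)) ^ e / ENNReal.ofReal t := rfl
    calc D ^ e * (f t * (G t) ^ β)
        = D ^ e * ((σ (ball x t) / ENNReal.ofReal (t ^ κ)) ^ e / ENNReal.ofReal t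
            * (G t) ^ β) := by rw [hft]
      _ = (D * (G t) ^ (γ * q) * (σ (ball x t) / ENNReal.ofReal (t ^ κ))) ^ e /
            ENNReal.ofReal t := by
          rw [ENNReal.mul_rpow_of_nonneg _ _ he.le,
            ENNReal.mul_rpow_of_nonneg _ _ he.le,
            ← ENNReal.rpow_mul (G t) (γ * q) e, hexp]
          simp only [div_eq_mul_inv]
          ring
      _ = ((D * (G t) ^ (γ * q) * σ (ball x t)) / ENNReal.ofReal (t ^ κ)) ^ e /
            ENNReal.ofReal t := by rw [mul_div_assoc]
  -- constant computation
  have hqe : (0:ℝ) ≤ q * e := by positivity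
  have hconst2 : D ^ e * ((2:ℝ≥0∞) ^ γ)⁻¹ = c₀ := by
    rw [hDdef, hc₀def, ← ENNReal.rpow_mul, ENNReal.mul_rpow_of_nonneg _ _ hqe,
      ← ENNReal.rpow_mul, ← ENNReal.rpow_mul, hid1, mul_assoc, hKdef.symm]
    calc K ^ β * K = K ^ β * K ^ (1:ℝ) := by rw [ENNReal.rpow_one]
      _ = K ^ (β + 1) := (ENNReal.rpow_add β 1 hK0 hKt).symm
      _ = K ^ γ := by rw [add_comm, hid2]
  -- final chain
  have hmeasJ : Measurable fun t => f t * (G t) ^ β :=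
    hfmeas.mul ((ENNReal.continuous_rpow_const.measurable).comp hGmeas)
  have hkey : ((G 0) / 2) ^ (1 + β) ≤ ∫⁻ t in Ioi (0:ℝ), f t * (G t) ^ β :=
    key f hfmeas hβpos.le
  calc c₀ * (wolff α p σ x) ^ γ
      = c₀ * (G 0) ^ γ := by rw [hWx]
    _ = D ^ e * (((2:ℝ≥0∞) ^ γ)⁻¹ * (G 0) ^ γ) := by rw [← hconst2]; ring
    _ = D ^ e * ((G 0) / 2) ^ γ := by
        rw [ENNReal.div_rpow_of_nonneg _ _ hγpos.le, div_eq_mul_inv]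
        ring
    _ = D ^ e * ((G 0) / 2) ^ (1 + β) := by rw [hid2]
    _ ≤ D ^ e * ∫⁻ t in Ioi (0:ℝ), f t * (G t) ^ β := mul_le_mul_right hkey _
    _ = ∫⁻ t in Ioi (0:ℝ), D ^ e * (f t * (G t) ^ β) :=
        (lintegral_const_mul _ hmeasJ).symm
    _ ≤ ∫⁻ t in Ioi (0:ℝ),
          (μ (ball x t) / ENNReal.ofReal (t ^ κ)) ^ e / ENNReal.ofReal t :=
        setLIntegral_mono' measurableSet_Ioi hstep3
    _ = wolff α p μ x := rfl
end
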